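/- arXiv:1710.08948 — 2 statements merged into one kernel-verified Lean document; each statement's English description precedes it below -/
import Mathlib

section
/- Let x be a nilpotent endomorphism of a finite-dimensional vector space V' with Jordan type ρ, and let H ⊂ V' be an x-stable hyperplane. Then the Jordan type ρ' of x restricted to H is obtained from ρ by deleting the last box of the l-th column of ρ, where l is the maximal integer such that H ⊇ im(x) + ker(x^{l-1}). -/
/-- `x` has Jordan type the partition recorded by the Young diagram `σ`: the length of the
`(k+1)`-st column of `σ` (i.e. the number of parts of size at least `k+1`) equals
`dim ker x^{k+1} - dim ker x^k`. -/
def HasJordanType {V : Type*} [AddCommGroup V] [Module ℂ V]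
    (x : Module.End ℂ V) (σ : YoungDiagram) : Prop :=
  ∀ k : ℕ, σ.colLen k =
    Module.finrank ℂ (LinearMap.ker (x ^ (k + 1))) - Module.finrank ℂ (LinearMap.ker (x ^ k))

/-- if `x` is nilpotent with Jordan type `ρ` on `V'` and `H` is an `x`-stable
hyperplane, then the Jordan type `ρ'` of `x|_H` is obtained from `ρ` by deleting the last box
of the `l`-th column, where `l` is maximal with `H ⊇ im(x) + ker(x^{l-1})`. -/
theorem jordan_type_hyperplane_restriction {V' : Type*} [AddCommGroup V'] [Module ℂ V']
    [FiniteDimensional ℂ V'] (x : Module.End ℂ V') (hx : IsNilpotent x)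
    (ρ : YoungDiagram) (hρ : HasJordanType x ρ)
    (H : Submodule ℂ V') (hcodim : Module.finrank ℂ V' = Module.finrank ℂ H + 1)
    (hstab : ∀ v ∈ H, x v ∈ H)
    (l : ℕ) (hl : 1 ≤ l)
    (hl1 : LinearMap.range x ⊔ LinearMap.ker (x ^ (l - 1)) ≤ H)
    (hl2 : ¬ (LinearMap.range x ⊔ LinearMap.ker (x ^ l) ≤ H)) :
    ∀ x' : Module.End ℂ H, (∀ v : H, (x' v : V') = x v) →
      ∀ ρ' : YoungDiagram, HasJordanType x' ρ' →
        ρ'.rowLen (ρ.colLen (l - 1) - 1) = ρ.rowLen (ρ.colLen (l - 1) - 1) - 1 ∧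
        ∀ i : ℕ, i ≠ ρ.colLen (l - 1) - 1 → ρ'.rowLen i = ρ.rowLen i := by
  intro x' hx' ρ' hρ'
  open Module LinearMap Submodule in
  -- dimensions of kernels of powers
  set g : ℕ → ℕ := fun k => finrank ℂ (LinearMap.ker (x ^ k)) with hg
  have hkermono : ∀ {a b : ℕ}, a ≤ b → LinearMap.ker (x ^ a) ≤ LinearMap.ker (x ^ b) := by
    intro a b hab v hv
    have : x ^ b = x ^ (b - a) * x ^ a := by rw [← pow_add]; congr 1; omega
    simp only [LinearMap.mem_ker] at hv ⊢
    rw [this, Module.End.mul_apply, hv, map_zero]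
  have hgmono : Monotone g := fun a b hab => Submodule.finrank_mono (hkermono hab)
  have hrange : LinearMap.range x ≤ H := le_trans le_sup_left hl1
  have hkerl1 : LinearMap.ker (x ^ (l - 1)) ≤ H := le_trans le_sup_right hl1
  have hkerl : ¬ LinearMap.ker (x ^ l) ≤ H := fun h => hl2 (sup_le hrange h)
  -- powers of the restriction
  have hpow : ∀ (k : ℕ) (v : H), ((x' ^ k) v : V') = (x ^ k) v := by
    intro k
    induction k with
    | zero => intro v; simp
    | succ n ih =>
      intro v
      rw [pow_succ, pow_succ, Module.End.mul_apply, Module.End.mul_apply, ih (x' v), hx' v]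
  -- kernel of restricted power = comap of kernel
  have hkercomap : ∀ k : ℕ, LinearMap.ker (x' ^ k) =
      (LinearMap.ker (x ^ k)).comap H.subtype := by
    intro k
    ext v
    simp only [LinearMap.mem_ker, Submodule.mem_comap, Submodule.subtype_apply]
    constructor
    · intro h; rw [← hpow k v, h]; rfl
    · intro h; ext; rw [hpow k v]; exact h
  have hkerdim : ∀ k : ℕ, finrank ℂ (LinearMap.ker (x' ^ k)) =
      finrank ℂ (LinearMap.ker (x ^ k) ⊓ H : Submodule ℂ V') := by
    intro k
    rw [hkercomap k]
    have h1 : (LinearMap.ker (x ^ k)).comap H.subtype =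
        (LinearMap.ker (x ^ k) ⊓ H).comap H.subtype := by
      ext v; simp [v.2]
    rw [h1]
    exact (Submodule.comapSubtypeEquivOfLe inf_le_right).finrank_eq
  set f : ℕ → ℕ := fun k => finrank ℂ (LinearMap.ker (x ^ k) ⊓ H : Submodule ℂ V') with hf
  -- small k : ker x^k ≤ H
  have hsmall : ∀ k : ℕ, k ≤ l - 1 → f k = g k := by
    intro k hk
    have : LinearMap.ker (x ^ k) ⊓ H = LinearMap.ker (x ^ k) :=
      inf_eq_left.mpr (le_trans (hkermono hk) hkerl1)
    simp only [hf, hg]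
    rw [this]
  -- big k : codimension 1 intersection
  have hbig : ∀ k : ℕ, l ≤ k → f k + 1 = g k := by
    intro k hk
    have hnle : ¬ LinearMap.ker (x ^ k) ≤ H := fun h => hkerl (le_trans (hkermono hk) h)
    have hsuptop : LinearMap.ker (x ^ k) ⊔ H = ⊤ := by
      apply Submodule.eq_top_of_finrank_eq
      have h1 : finrank ℂ H < finrank ℂ (LinearMap.ker (x ^ k) ⊔ H : Submodule ℂ V') := by
        apply Submodule.finrank_lt_finrank_of_lt
        exact lt_of_le_of_ne le_sup_right
          (fun h => hnle (h ▸ le_sup_left : LinearMap.ker (x ^ k) ≤ _))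
      have h2 : finrank ℂ (LinearMap.ker (x ^ k) ⊔ H : Submodule ℂ V') ≤ finrank ℂ V' :=
        Submodule.finrank_le _
      omega
    have := Submodule.finrank_sup_add_finrank_inf_eq (LinearMap.ker (x ^ k)) H
    rw [hsuptop, finrank_top] at this
    simp only [hf, hg]
    omega
  -- column lengths of ρ'
  have hcolρ : ∀ k : ℕ, ρ.colLen k = g (k + 1) - g k := hρ
  have hcolρ' : ∀ k : ℕ, ρ'.colLen k = f (k + 1) - f k := by
    intro k
    rw [hρ' k, hkerdim (k + 1), hkerdim k]
  have hgpos : 1 ≤ g l := by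
    have := hbig l le_rfl
    omega
  set c := ρ.colLen (l - 1) with hc
  have hcval : c = g l - g (l - 1) := by
    have := hcolρ (l - 1)
    rwa [Nat.sub_add_cancel hl] at this
  have hcpos : 1 ≤ c := by
    rw [hcval]
    have h1 : f (l - 1) = g (l - 1) := hsmall (l - 1) le_rfl
    have h2 : f l + 1 = g l := hbig l le_rfl
    have h3 : f (l - 1) ≤ f l :=
      Submodule.finrank_mono (inf_le_inf_right H (hkermono (Nat.sub_le l 1)))
    omega
  -- column lengths comparison
  have hcol_eq : ∀ k : ℕ, k ≠ l - 1 → ρ'.colLen k = ρ.colLen k := by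
    intro k hk
    rcases lt_or_ge k (l - 1) with h | h
    · rw [hcolρ' k, hcolρ k, hsmall k (le_of_lt h), hsmall (k + 1) (by omega)]
    · have hkl : l ≤ k := by omega
      rw [hcolρ' k, hcolρ k]
      have h1 := hbig k hkl
      have h2 := hbig (k + 1) (by omega)
      omega
  have hcol_l : ρ'.colLen (l - 1) = c - 1 := by
    rw [hcolρ' (l - 1), hcval, Nat.sub_add_cancel hl]
    have h1 : f (l - 1) = g (l - 1) := hsmall (l - 1) le_rfl
    have h2 : f l + 1 = g l := hbig l le_rfl
    have h3 : g (l - 1) ≤ g l := hgmono (by omega)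
    omega
  -- ρ has strictly shorter column at l (from antitonicity of ρ')
  have hcol_next : ρ.colLen l ≤ c - 1 := by
    have h1 : ρ'.colLen l ≤ ρ'.colLen (l - 1) := ρ'.colLen_anti _ _ (by omega)
    rw [hcol_l] at h1
    rw [← hcol_eq l (by omega)]
    exact h1
  -- memberships
  have hmemρ : ∀ i j : ℕ, (i, j) ∈ ρ ↔ i < ρ.colLen j := fun i j =>
    YoungDiagram.mem_iff_lt_colLen
  have hmemρ' : ∀ i j : ℕ, (i, j) ∈ ρ' ↔ i < ρ'.colLen j := fun i j =>
    YoungDiagram.mem_iff_lt_colLen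
  set r := c - 1 with hr
  have hmem_eq : ∀ i j : ℕ, i ≠ r → ((i, j) ∈ ρ' ↔ (i, j) ∈ ρ) := by
    intro i j hi
    rw [hmemρ, hmemρ']
    rcases eq_or_ne j (l - 1) with rfl | hj
    · rw [hcol_l, ← hc]
      omega
    · rw [hcol_eq j hj]
  -- rows other than r
  have hrow_eq : ∀ i : ℕ, i ≠ r → ρ'.rowLen i = ρ.rowLen i := by
    intro i hi
    have h1 : ∀ j : ℕ, j < ρ'.rowLen i ↔ j < ρ.rowLen i := by
      intro j
      rw [← YoungDiagram.mem_iff_lt_rowLen, ← YoungDiagram.mem_iff_lt_rowLen]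
      exact hmem_eq i j hi
    have h2 := h1 (ρ'.rowLen i)
    have h3 := h1 (ρ.rowLen i)
    omega
  refine ⟨?_, hrow_eq⟩
  -- row r
  have hrowρ : ρ.rowLen r = l := by
    have h1 : (r, l - 1) ∈ ρ := by rw [hmemρ, ← hc]; omega
    have h2 : (r, l) ∉ ρ := by rw [hmemρ]; omega
    have h3 : l - 1 < ρ.rowLen r := YoungDiagram.mem_iff_lt_rowLen.mp h1
    have h4 : ¬ l < ρ.rowLen r := fun h => h2 (YoungDiagram.mem_iff_lt_rowLen.mpr h)
    omega
  have hrowρ' : ρ'.rowLen r = l - 1 := by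
    have h2 : (r, l - 1) ∉ ρ' := by rw [hmemρ', hcol_l]; omega
    have h4 : ¬ l - 1 < ρ'.rowLen r := fun h => h2 (YoungDiagram.mem_iff_lt_rowLen.mpr h)
    rcases Nat.eq_zero_or_pos (l - 1) with h0 | h0
    · omega
    · have h1 : (r, l - 1 - 1) ∈ ρ' := by
        rw [hmemρ', hcol_eq (l - 1 - 1) (by omega)]
        calc r < c := by omega
        _ ≤ ρ.colLen (l - 1 - 1) := ρ.colLen_anti _ _ (by omega)
      have h3 : l - 1 - 1 < ρ'.rowLen r := YoungDiagram.mem_iff_lt_rowLen.mp h1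
      omega
  rw [hrowρ, hrowρ']
end

section
/- Let x be nilpotent on V', U ⊂ V' a 1-dimensional subspace of ker(x) contained in x^{k-1}(V') but not in x^k(V'), with Jordan type of x on V' equal to σ. Then the Jordan type of x on V'/U is obtained from σ by decreasing by 1 the part σ_j, where j is maximal such that σ_j ≥ k; moreover σ_j = k for this j is not required — the removed box is the last box of column k. -/
open Module LinearMap Submodule


lemma aux_finrank_map_add {V W : Type*} [AddCommGroup V] [Module ℂ V] [FiniteDimensional ℂ V]
    [AddCommGroup W] [Module ℂ W] (f : V →ₗ[ℂ] W) (p : Submodule ℂ V)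
    (h : LinearMap.ker f ≤ p) :
    finrank ℂ (p.map f) + finrank ℂ (LinearMap.ker f) = finrank ℂ p := by
  have h1 := LinearMap.finrank_range_add_finrank_ker (f.domRestrict p)
  rw [LinearMap.range_domRestrict, LinearMap.ker_domRestrict] at h1
  rwa [(Submodule.comapSubtypeEquivOfLe h).finrank_eq] at h1

/-- Spaltenstein's lemma. If `U` is a line in `ker x` contained in
`x^{k-1}(V')` but not in `x^k(V')`, and `x` has Jordan type `σ` on `V'`, then the Jordan type
of `x` on `V'/U` is obtained from `σ` by decreasing by `1` the part `σ_j`, where `j` is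
maximal such that `σ_j ≥ k` (removal of the last box of column `k`). -/
theorem spaltenstein_quotient_lemma {V' : Type*} [AddCommGroup V'] [Module ℂ V']
    [FiniteDimensional ℂ V'] (x : Module.End ℂ V') (hx : IsNilpotent x)
    (σ : YoungDiagram) (hσ : HasJordanType x σ)
    (U : Submodule ℂ V') (hU1 : Module.finrank ℂ U = 1) (hUker : U ≤ LinearMap.ker x)
    (k : ℕ) (hk : 1 ≤ k)
    (hk1 : U ≤ LinearMap.range (x ^ (k - 1))) (hk2 : ¬ U ≤ LinearMap.range (x ^ k)) :
    ∀ x' : Module.End ℂ (V' ⧸ U),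
      (∀ v : V', x' (Submodule.Quotient.mk v) = Submodule.Quotient.mk (x v)) →
      ∀ σ' : YoungDiagram, HasJordanType x' σ' →
        σ'.rowLen (σ.colLen (k - 1) - 1) = σ.rowLen (σ.colLen (k - 1) - 1) - 1 ∧
        ∀ i : ℕ, i ≠ σ.colLen (k - 1) - 1 → σ'.rowLen i = σ.rowLen i := by
  intro x' hx' σ' hσ'
  set d : ℕ → ℕ := fun m => finrank ℂ (LinearMap.ker (x ^ m)) with hd
  set d' : ℕ → ℕ := fun m => finrank ℂ (LinearMap.ker (x' ^ m)) with hd'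
  -- U ≤ ker x^m for m ≥ 1
  have hUkerm : ∀ m, 1 ≤ m → U ≤ LinearMap.ker (x ^ m) := by
    intro m hm u hu
    have h0 : x u = 0 := hUker hu
    simp only [LinearMap.mem_ker]
    obtain ⟨n, rfl⟩ := Nat.exists_eq_add_of_le hm
    rw [add_comm, pow_succ, Module.End.mul_apply, h0, map_zero]
  -- commuting powers
  have hcomm : ∀ m (v : V'), (x' ^ m) (Submodule.Quotient.mk v)
      = Submodule.Quotient.mk ((x ^ m) v) := by
    intro m
    induction m with
    | zero => simp
    | succ n ih =>
      intro v
      rw [pow_succ', pow_succ', Module.End.mul_apply, Module.End.mul_apply, ih, hx']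
  -- kernel of x'^m as image of comap under mkQ
  have hker : ∀ m, LinearMap.ker (x' ^ m)
      = (Submodule.comap (x ^ m : Module.End ℂ V') U).map U.mkQ := by
    intro m
    ext w
    constructor
    · intro hw
      obtain ⟨v, rfl⟩ := U.mkQ_surjective w
      refine ⟨v, ?_, rfl⟩
      have h1 : (x' ^ m) (Submodule.Quotient.mk v) = 0 := hw
      rw [hcomm] at h1
      simpa [Submodule.Quotient.mk_eq_zero] using h1
    · rintro ⟨v, hv, rfl⟩
      show (x' ^ m) (Submodule.Quotient.mk v) = 0
      rw [hcomm]
      simpa [Submodule.Quotient.mk_eq_zero] using hv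
  -- finrank of the comap
  have hWdim : ∀ m, finrank ℂ (Submodule.comap (x ^ m : Module.End ℂ V') U)
      = finrank ℂ (LinearMap.range (x ^ m) ⊓ U : Submodule ℂ V') + d m := by
    intro m
    have h1 := aux_finrank_map_add (x ^ m : V' →ₗ[ℂ] V')
      (Submodule.comap (x ^ m : Module.End ℂ V') U) (fun v hv => by
        simp only [Submodule.mem_comap]
        simp only [LinearMap.mem_ker] at hv
        rw [hv]; exact U.zero_mem)
    rw [Submodule.map_comap_eq] at h1
    exact h1.symm
  -- U ≤ comap
  have hUle : ∀ m, U ≤ Submodule.comap (x ^ m : Module.End ℂ V') U := by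
    intro m
    rcases Nat.eq_zero_or_pos m with hm | hm
    · subst hm
      intro u hu
      simp only [pow_zero, Submodule.mem_comap, Module.End.one_apply]
      exact hu
    · exact fun u hu => by
        have : (x ^ m) u = 0 := hUkerm m hm hu
        simp only [Submodule.mem_comap, this]; exact U.zero_mem
  -- d' m = finrank (comap) - 1
  have hd'eq : ∀ m, d' m + 1 = finrank ℂ (Submodule.comap (x ^ m : Module.End ℂ V') U) := by
    intro m
    have h1 := aux_finrank_map_add U.mkQ (Submodule.comap (x ^ m : Module.End ℂ V') U)
      (by rw [Submodule.ker_mkQ]; exact hUle m)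
    rw [← hker m, Submodule.ker_mkQ, hU1] at h1
    exact h1
  -- case m < k : range x^m ⊓ U = U
  have hcase1 : ∀ m, m ≤ k - 1 → d' m = d m := by
    intro m hm
    have hsub : U ≤ LinearMap.range (x ^ m) := by
      intro u hu
      obtain ⟨v, hv⟩ := hk1 hu
      refine ⟨(x ^ (k - 1 - m)) v, ?_⟩
      rw [← Module.End.mul_apply, ← pow_add]
      rw [show m + (k - 1 - m) = k - 1 by omega]
      exact hv
    have : LinearMap.range (x ^ m) ⊓ U = U := inf_eq_right.mpr hsub
    have h1 := hd'eq m
    rw [hWdim m, this, hU1] at h1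
    omega
  -- case m ≥ k : range x^m ⊓ U is proper in U
  have hcase2 : ∀ m, k ≤ m → d' m + 1 = d m := by
    intro m hm
    have hsub : ¬ U ≤ LinearMap.range (x ^ m) := by
      intro hle
      apply hk2
      intro u hu
      obtain ⟨v, hv⟩ := hle hu
      refine ⟨(x ^ (m - k)) v, ?_⟩
      rw [← Module.End.mul_apply, ← pow_add]
      rw [show k + (m - k) = m by omega]
      exact hv
    have hlt : (LinearMap.range (x ^ m) ⊓ U : Submodule ℂ V') < U := by
      refine lt_of_le_of_ne inf_le_right ?_
      intro heq
      exact hsub (by rw [← heq]; exact inf_le_left)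
    have h0 : finrank ℂ (LinearMap.range (x ^ m) ⊓ U : Submodule ℂ V') = 0 := by
      have := Submodule.finrank_lt_finrank_of_lt hlt
      omega
    have h1 := hd'eq m
    rw [hWdim m, h0] at h1
    omega
  -- monotonicity of d
  have hdmono : ∀ m, d m ≤ d (m + 1) := by
    intro m
    apply Submodule.finrank_mono
    intro v hv
    simp only [LinearMap.mem_ker] at hv ⊢
    rw [pow_succ', Module.End.mul_apply, hv, map_zero]
  -- column k is nonempty : d (k-1) < d k
  have hstep : d (k - 1) + 1 ≤ d k := by
    obtain ⟨u, hu, hune⟩ : ∃ u ∈ U, u ≠ 0 := by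
      by_contra hcon
      push_neg at hcon
      have : U = ⊥ := by
        ext v; simp only [Submodule.mem_bot]
        exact ⟨fun hv => hcon v hv, fun hv => by rw [hv]; exact U.zero_mem⟩
      rw [this] at hU1
      simp [finrank_bot] at hU1
    obtain ⟨v, hv⟩ := hk1 hu
    have hvk : v ∈ LinearMap.ker (x ^ k) := by
      simp only [LinearMap.mem_ker]
      have : x ^ k = x * x ^ (k - 1) := by
        rw [← pow_succ']
        congr 1
        omega
      rw [this, Module.End.mul_apply, hv]
      exact hUker hu
    have hvk1 : v ∉ LinearMap.ker (x ^ (k - 1)) := by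
      simp only [LinearMap.mem_ker, hv]
      exact hune
    have hlt : LinearMap.ker (x ^ (k - 1)) < LinearMap.ker (x ^ k) := by
      refine lt_of_le_of_ne ?_ ?_
      · intro w hw
        simp only [LinearMap.mem_ker] at hw ⊢
        have : x ^ k = x ^ (k - (k-1)) * x ^ (k - 1) := by rw [← pow_add]; congr 1; omega
        rw [this, Module.End.mul_apply, hw, map_zero]
      · intro heq; rw [heq] at hvk1; exact hvk1 hvk
    have h2 := Submodule.finrank_lt_finrank_of_lt hlt
    show finrank ℂ (LinearMap.ker (x ^ (k - 1))) + 1 ≤ finrank ℂ (LinearMap.ker (x ^ k))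
    omega
  -- column lengths of σ and σ'
  have hcol : ∀ m, σ.colLen m = d (m + 1) - d m := hσ
  have hcol' : ∀ m, σ'.colLen m = d' (m + 1) - d' m := hσ'
  have hc1 : ∀ m, m + 1 ≤ k - 1 → σ'.colLen m = σ.colLen m := by
    intro m hm
    rw [hcol, hcol', hcase1 m (by omega), hcase1 (m+1) hm]
  have hc2 : σ'.colLen (k - 1) = σ.colLen (k - 1) - 1 := by
    have e1 : d' (k - 1) = d (k - 1) := hcase1 _ le_rfl
    have e2 : d' (k - 1 + 1) + 1 = d (k - 1 + 1) := by
      rw [show k - 1 + 1 = k by omega]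
      exact hcase2 k le_rfl
    rw [hcol, hcol', e1]
    omega
  have hmono2 : ∀ a b : ℕ, a ≤ b → d a ≤ d b := by
    intro a b hab
    induction b, hab using Nat.le_induction with
    | base => exact le_rfl
    | succ n hn ih => exact le_trans ih (hdmono n)
  have hdge1 : ∀ m, k ≤ m → 1 ≤ d m := by
    intro m hm
    have := hmono2 k m hm
    omega
  have hc3 : ∀ m, k ≤ m → σ'.colLen m = σ.colLen m := by
    intro m hm
    have e1 := hcase2 m hm
    have e2 := hcase2 (m + 1) (by omega)
    rw [hcol, hcol']
    omega
  -- σ.colLen (k-1) ≥ 1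
  have hcpos : 1 ≤ σ.colLen (k - 1) := by
    rw [hcol]
    have := hdmono (k-1)
    rw [show k - 1 + 1 = k by omega] at *
    omega
  set j0 := σ.colLen (k - 1) - 1 with hj0
  -- key inequality from σ' Young diagram: colLen k ≤ j0
  have hkey : σ.colLen k ≤ j0 := by
    have h1 := σ'.colLen_anti (k - 1) k (by omega)
    rw [hc2, hc3 k le_rfl] at h1
    omega
  -- antitone of σ columns
  have hanti : ∀ j, j ≤ k - 1 → σ.colLen (k-1) ≤ σ.colLen j := fun j hj => σ.colLen_anti j (k-1) hj
  -- membership characterization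
  have hmem' : ∀ i j, (i, j) ∈ σ' ↔ (j + 1 ≤ k - 1 ∧ (i, j) ∈ σ)
      ∨ (j = k - 1 ∧ i < σ.colLen (k-1) - 1) ∨ (k ≤ j ∧ (i, j) ∈ σ) := by
    intro i j
    rcases Nat.lt_trichotomy (j + 1) k with h | h | h
    · rw [YoungDiagram.mem_iff_lt_colLen, hc1 j (by omega), ← YoungDiagram.mem_iff_lt_colLen]
      constructor
      · intro hm; exact Or.inl ⟨by omega, hm⟩
      · rintro (⟨_, hm⟩ | ⟨hj, _⟩ | ⟨hj, _⟩) <;> first | exact hm | omega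
    · have hj : j = k - 1 := by omega
      subst hj
      rw [YoungDiagram.mem_iff_lt_colLen, hc2]
      constructor
      · intro hm; exact Or.inr (Or.inl ⟨rfl, hm⟩)
      · rintro (⟨hj, _⟩ | ⟨_, hm⟩ | ⟨hj, _⟩) <;> first | exact hm | omega
    · rw [YoungDiagram.mem_iff_lt_colLen, hc3 j (by omega), ← YoungDiagram.mem_iff_lt_colLen]
      constructor
      · intro hm; exact Or.inr (Or.inr ⟨by omega, hm⟩)
      · rintro (⟨hj, _⟩ | ⟨hj, _⟩ | ⟨_, hm⟩) <;> first | exact hm | omega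
  constructor
  · -- rowLen at j0
    have hrow' : ∀ j, (j0, j) ∈ σ' ↔ j < k - 1 := by
      intro j
      rw [hmem' j0 j]
      constructor
      · rintro (⟨hj, _⟩ | ⟨hj, hlt⟩ | ⟨hj, hm⟩)
        · omega
        · omega
        · exfalso
          rw [YoungDiagram.mem_iff_lt_colLen] at hm
          have := σ.colLen_anti k j hj
          omega
      · intro hj
        refine Or.inl ⟨by omega, ?_⟩
        rw [YoungDiagram.mem_iff_lt_colLen]
        have := hanti j (by omega)
        omega
    have hrow : ∀ j, (j0, j) ∈ σ ↔ j < k := by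
      intro j
      rw [YoungDiagram.mem_iff_lt_colLen]
      constructor
      · intro hm
        by_contra hcon
        have := σ.colLen_anti k j (by omega)
        omega
      · intro hj
        have := hanti j (by omega)
        omega
    have e1 : σ'.rowLen j0 = k - 1 := by
      have a1 := (hrow' (σ'.rowLen j0)).symm.trans YoungDiagram.mem_iff_lt_rowLen
      have a2 := (hrow' (k - 1)).symm.trans YoungDiagram.mem_iff_lt_rowLen
      omega
    have e2 : σ.rowLen j0 = k := by
      have a1 := (hrow (σ.rowLen j0)).symm.trans YoungDiagram.mem_iff_lt_rowLen
      have a2 := (hrow k).symm.trans YoungDiagram.mem_iff_lt_rowLen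
      omega
    rw [e1, e2]
  · intro i hi
    have hsame : ∀ j, (i, j) ∈ σ' ↔ (i, j) ∈ σ := by
      intro j
      rw [hmem' i j]
      constructor
      · rintro (⟨_, hm⟩ | ⟨hj, hlt⟩ | ⟨_, hm⟩)
        · exact hm
        · subst hj
          rw [YoungDiagram.mem_iff_lt_colLen]
          omega
        · exact hm
      · intro hm
        rcases Nat.lt_trichotomy (j + 1) k with h | h | h
        · rcases Nat.lt_or_ge (j + 1) (k - 1 + 1) with h2 | h2
          · exact Or.inl ⟨by omega, hm⟩
          · have hj : j = k - 1 := by omega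
            subst hj
            rw [YoungDiagram.mem_iff_lt_colLen] at hm
            exact Or.inr (Or.inl ⟨rfl, by omega⟩)
        · have hj : j = k - 1 := by omega
          subst hj
          rw [YoungDiagram.mem_iff_lt_colLen] at hm
          exact Or.inr (Or.inl ⟨rfl, by omega⟩)
        · exact Or.inr (Or.inr ⟨by omega, hm⟩)
    have a1 := (hsame (σ'.rowLen i)).symm.trans YoungDiagram.mem_iff_lt_rowLen
    have a2 := (hsame (σ.rowLen i)).symm.trans YoungDiagram.mem_iff_lt_rowLen
    rw [YoungDiagram.mem_iff_lt_rowLen] at a1 a2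
    omega
end
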